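/- Let {(σ_n, v_n, u_n)}_{n∈ℕ} be a singular system for the compact linear operator K : X → Y such that (u_n) spans the closure of the range of K and (v_n) spans the closure of the range of K*. Let α > 0 and c₁ > 0 satisfy σ_n ≤ c₁ √α for all n. If x = K* z for some z ∈ Y, then the ℓ¹-SVD reconstruction error from exact data satisfies ‖ ∑_n (1/σ_n²) S_α(σ_n ⟨K x, u_n⟩) v_n − x ‖ ≤ c₁ √α ‖z‖. -/

import Mathlib

open scoped InnerProductSpace

/-- The soft thresholding function `S_α`. -/
noncomputable def softThresh (α t : ℝ) : ℝ :=
  if t ≤ -(α / 2) then t + α / 2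
  else if α / 2 ≤ t then t - α / 2
  else 0

lemma abs_softThresh_sub_le {α : ℝ} (hα : 0 ≤ α) (t : ℝ) :
    |softThresh α t - t| ≤ |t| := by
  unfold softThresh
  split_ifs with h1 h2
  · have h : t + α / 2 - t = α / 2 := by ring
    rw [h, abs_of_nonneg (by linarith), abs_of_nonpos (by linarith)]
    linarith
  · have h : t - α / 2 - t = -(α / 2) := by ring
    rw [h, abs_neg, abs_of_nonneg (by linarith), abs_of_nonneg (by linarith)]
    linarith
  · simp

set_option maxHeartbeats 1000000 in
/-- If `σ_n ≤ c₁ √α` for all `n` and `x = K* z`, then the `ℓ¹`-SVD reconstruction error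
from exact data satisfies `‖∑ (1/σ_n²) S_α(σ_n ⟨K x, u_n⟩) v_n − x‖ ≤ c₁ √α ‖z‖`. -/
theorem l1SVD_error_estimate_range_adjoint {X Y : Type*}
    [NormedAddCommGroup X] [InnerProductSpace ℝ X] [CompleteSpace X]
    [NormedAddCommGroup Y] [InnerProductSpace ℝ Y] [CompleteSpace Y]
    (K : X →L[ℝ] Y) (hK : IsCompactOperator K)
    (σ : ℕ → ℝ) (v : ℕ → X) (u : ℕ → Y)
    (hσ : ∀ n, 0 < σ n) (hv : Orthonormal ℝ v) (hu : Orthonormal ℝ u)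
    (hKv : ∀ n, K (v n) = σ n • u n)
    (hKadj : ∀ n, (ContinuousLinearMap.adjoint K) (u n) = σ n • v n)
    (huspan : (Submodule.span ℝ (Set.range u)).topologicalClosure
      = (LinearMap.range (K : X →ₗ[ℝ] Y)).topologicalClosure)
    (hvspan : (Submodule.span ℝ (Set.range v)).topologicalClosure
      = (LinearMap.range ((ContinuousLinearMap.adjoint K : Y →L[ℝ] X) : Y →ₗ[ℝ] X)).topologicalClosure)
    (α : ℝ) (hα : 0 < α) (c₁ : ℝ) (hc₁ : 0 < c₁)
    (hσb : ∀ n, σ n ≤ c₁ * Real.sqrt α)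
    (z : Y) (x : X) (hx : x = ContinuousLinearMap.adjoint K z) :
    ‖(∑' n, ((σ n ^ 2)⁻¹ * softThresh α (σ n * ⟪K x, u n⟫_ℝ)) • v n) - x‖
      ≤ c₁ * Real.sqrt α * ‖z‖ := by
  classical
  have hα' : (0:ℝ) ≤ α := hα.le
  set a : ℕ → ℝ := fun n => (σ n ^ 2)⁻¹ * softThresh α (σ n * ⟪K x, u n⟫_ℝ) with ha
  set xc : ℕ → ℝ := fun n => ⟪x, v n⟫_ℝ with hxc
  have harg : ∀ n, σ n * ⟪K x, u n⟫_ℝ = σ n ^ 2 * xc n := by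
    intro n
    have h1 : ⟪K x, u n⟫_ℝ = σ n * xc n := by
      rw [← ContinuousLinearMap.adjoint_inner_right, hKadj n, real_inner_smul_right]
    rw [h1]; ring
  have hxcz : ∀ n, xc n = σ n * ⟪z, u n⟫_ℝ := by
    intro n
    show ⟪x, v n⟫_ℝ = σ n * ⟪z, u n⟫_ℝ
    rw [hx, ContinuousLinearMap.adjoint_inner_left, hKv n, real_inner_smul_right]
  -- pointwise error bound
  have he : ∀ n, |a n - xc n| ≤ |xc n| := by
    intro n
    have hσ2 : (0:ℝ) < σ n ^ 2 := pow_pos (hσ n) 2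
    have h1 : a n - xc n
        = (σ n ^ 2)⁻¹ * (softThresh α (σ n ^ 2 * xc n) - σ n ^ 2 * xc n) := by
      rw [ha]
      simp only [harg n]
      field_simp
      rw [sub_div, mul_div_cancel_left₀ _ hσ2.ne']
    rw [h1, abs_mul, abs_of_nonneg (inv_nonneg.mpr hσ2.le)]
    calc (σ n ^ 2)⁻¹ * |softThresh α (σ n ^ 2 * xc n) - σ n ^ 2 * xc n|
        ≤ (σ n ^ 2)⁻¹ * |σ n ^ 2 * xc n| :=
          mul_le_mul_of_nonneg_left (abs_softThresh_sub_le hα' _) (inv_nonneg.mpr hσ2.le)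
      _ = |xc n| := by
          rw [abs_mul, abs_of_nonneg hσ2.le, ← mul_assoc, inv_mul_cancel₀ hσ2.ne', one_mul]
  -- the closed subspace spanned by v
  set V := (Submodule.span ℝ (Set.range v)).topologicalClosure with hV
  haveI : CompleteSpace V := (Submodule.isClosed_topologicalClosure _).completeSpace_coe
  have hmem : ∀ n, v n ∈ V :=
    fun n => Submodule.le_topologicalClosure _ (Submodule.subset_span ⟨n, rfl⟩)
  set v' : ℕ → V := fun n => ⟨v n, hmem n⟩ with hv'def
  have hv' : Orthonormal ℝ v' := by
    rw [orthonormal_iff_ite] at hv ⊢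
    intro i j
    simpa [Submodule.coe_inner] using hv i j
  have himg : ((↑) '' ((Submodule.span ℝ (Set.range v') : Submodule ℝ V) : Set V) : Set X)
      = ((Submodule.span ℝ (Set.range v) : Submodule ℝ X) : Set X) := by
    have hmap : (Submodule.span ℝ (Set.range v')).map V.subtype
        = Submodule.span ℝ (Set.range v) := by
      rw [Submodule.map_span, ← Set.range_comp]
      rfl
    rw [← hmap]
    rfl
  have hsp : ⊤ ≤ (Submodule.span ℝ (Set.range v')).topologicalClosure := by
    intro w _
    have hw : (w : X) ∈ closure ((Submodule.span ℝ (Set.range v) : Submodule ℝ X) : Set X) :=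
      w.2
    show w ∈ closure ((Submodule.span ℝ (Set.range v') : Submodule ℝ V) : Set V)
    rw [closure_subtype, himg]
    exact hw
  set b := HilbertBasis.mk hv' hsp with hb
  have hbc : ∀ n, b n = v' n := fun n => congrFun (HilbertBasis.coe_mk hv' hsp) n
  have hxV : x ∈ V := by
    rw [hvspan]
    exact Submodule.le_topologicalClosure _ (LinearMap.mem_range.mpr ⟨z, hx.symm⟩)
  set x' : V := ⟨x, hxV⟩ with hx'
  have hrepr : ∀ n, b.repr x' n = xc n := by
    intro n
    rw [HilbertBasis.repr_apply_apply, hbc]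
    rw [hxc]
    exact real_inner_comm _ _
  have hx_sum : HasSum (fun n => xc n • v n) x := by
    have h := (b.hasSum_repr x').mapL V.subtypeL
    have heq : (fun n => V.subtypeL (b.repr x' n • b n)) = fun n => xc n • v n := by
      funext n
      rw [map_smul, hrepr, hbc]
      rfl
    rw [heq] at h
    exact h
  -- summability
  have S2 : Summable (fun n => xc n ^ 2) := by
    have := hv.inner_products_summable x
    simpa [Real.norm_eq_abs, sq_abs, real_inner_comm, hxc] using this
  set e : ℕ → ℝ := fun n => a n - xc n with hedef
  have he2 : Summable (fun n => e n ^ 2) := by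
    refine S2.of_nonneg_of_le (fun n => sq_nonneg _) (fun n => ?_)
    have h1 := he n
    calc e n ^ 2 = |e n| ^ 2 := (sq_abs _).symm
      _ ≤ |xc n| ^ 2 := pow_le_pow_left₀ (abs_nonneg _) h1 2
      _ = xc n ^ 2 := sq_abs _
  have hesum : Summable (fun n => e n • v n) := by
    have hof := hv.orthogonalFamily
    have := (hof.summable_iff_norm_sq_summable e).mpr (by
      simpa [Real.norm_eq_abs, sq_abs] using he2)
    simpa using this
  have hasum : Summable (fun n => a n • v n) := by
    have heq : (fun n => a n • v n) = fun n => xc n • v n + e n • v n := by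
      funext n
      rw [show a n = xc n + e n by simp [hedef], add_smul]
    rw [heq]
    exact hx_sum.summable.add hesum
  have hy : HasSum (fun n => a n • v n) (∑' n, a n • v n) := hasum.hasSum
  set y := ∑' n, a n • v n with hydef
  have hd : HasSum (fun n => e n • v n) (y - x) := by
    have h := hy.sub hx_sum
    have heq : (fun n => a n • v n - xc n • v n) = fun n => e n • v n := by
      funext n
      rw [← sub_smul]
    rwa [heq] at h
  set d := y - x with hddef
  have hdv : ∀ m, ⟪v m, d⟫_ℝ = e m := by
    intro m
    have h := hd.mapL (innerSL ℝ (v m))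
    simp only [innerSL_apply_apply, real_inner_smul_right] at h
    rw [orthonormal_iff_ite] at hv
    have h3 : (fun n => e n * ⟪v m, v n⟫_ℝ) = fun n => if n = m then e m else 0 := by
      funext n
      rw [hv m n]
      by_cases hnm : n = m
      · subst hnm; simp
      · simp [hnm, Ne.symm hnm]
    rw [h3] at h
    exact h.unique (hasSum_ite_eq m (e m))
  have hnormsq : HasSum (fun n => e n * e n) (‖d‖ ^ 2) := by
    have h := hd.mapL (innerSL ℝ d)
    simp only [innerSL_apply_apply, real_inner_smul_right] at h
    rw [real_inner_self_eq_norm_sq] at h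
    have heq : (fun n => e n * ⟪d, v n⟫_ℝ) = fun n => e n * e n := by
      funext n
      rw [real_inner_comm, hdv n]
    rwa [heq] at h
  -- Bessel for u and z
  have hz2s : Summable (fun n => ⟪z, u n⟫_ℝ ^ 2) := by
    have := hu.inner_products_summable z
    simpa [Real.norm_eq_abs, sq_abs, real_inner_comm] using this
  have hz2 : ∑' n, ⟪z, u n⟫_ℝ ^ 2 ≤ ‖z‖ ^ 2 := by
    have := hu.tsum_inner_products_le z
    simpa [Real.norm_eq_abs, sq_abs, real_inner_comm] using this
  have key : ‖d‖ ^ 2 ≤ (c₁ * Real.sqrt α * ‖z‖) ^ 2 := by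
    have h1 : ‖d‖ ^ 2 = ∑' n, e n * e n := hnormsq.tsum_eq.symm
    have hle : ∀ n, e n * e n ≤ (c₁ ^ 2 * α) * ⟪z, u n⟫_ℝ ^ 2 := by
      intro n
      have h2 : |e n| ≤ |xc n| := he n
      have h3 : xc n = σ n * ⟪z, u n⟫_ℝ := hxcz n
      have h4 : σ n ≤ c₁ * Real.sqrt α := hσb n
      have h5 : (0:ℝ) < σ n := hσ n
      have hsq : Real.sqrt α ^ 2 = α := Real.sq_sqrt hα'
      have step1 : e n * e n ≤ xc n ^ 2 := by
        nlinarith [abs_nonneg (e n), abs_nonneg (xc n), sq_abs (e n), sq_abs (xc n)]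
      have step2 : xc n ^ 2 ≤ (c₁ ^ 2 * α) * ⟪z, u n⟫_ℝ ^ 2 := by
        rw [h3, mul_pow]
        have : σ n ^ 2 ≤ c₁ ^ 2 * α := by nlinarith [Real.sqrt_nonneg α]
        nlinarith [sq_nonneg (⟪z, u n⟫_ℝ)]
      linarith
    have hmulsum : Summable (fun n => e n * e n) := by
      simpa [sq] using he2
    calc ‖d‖ ^ 2 = ∑' n, e n * e n := h1
      _ ≤ ∑' n, (c₁ ^ 2 * α) * ⟪z, u n⟫_ℝ ^ 2 :=
          Summable.tsum_le_tsum hle hmulsum (hz2s.mul_left _)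
      _ = (c₁ ^ 2 * α) * ∑' n, ⟪z, u n⟫_ℝ ^ 2 := tsum_mul_left
      _ ≤ (c₁ ^ 2 * α) * ‖z‖ ^ 2 := by
          have : (0:ℝ) ≤ c₁ ^ 2 * α := by positivity
          exact mul_le_mul_of_nonneg_left hz2 this
      _ = (c₁ * Real.sqrt α * ‖z‖) ^ 2 := by
          rw [mul_pow, mul_pow, Real.sq_sqrt hα']
  have hB : (0:ℝ) ≤ c₁ * Real.sqrt α * ‖z‖ := by positivity
  have hfinal : ‖d‖ ≤ c₁ * Real.sqrt α * ‖z‖ := by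
    nlinarith [norm_nonneg d]
  exact hfinal
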